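/- Let V be a finite set with n := |V|, let c : V × V → ℝ≥0 satisfy c(v,v) = 0 for all v ∈ V and the triangle inequality, let D := max_{x,y∈V} c(x,y) > 0, let 1 ≤ k ≤ n−1, and set K := D/(2n³). Then there exists ĉ : V × V → ℤ≥0 with ĉ(v,v) = 0 for all v ∈ V, satisfying the triangle inequality, with ĉ(x,y) ≤ 2n³ for all x,y ∈ V, such that every tour T on V satisfies ĉ^{(k)}(T) ≤ c^{(k)}(T)/K ≤ 2·ĉ^{(k)}(T) as well as ĉ^{(k)}(T) ≥ n². -/

import Mathlib

noncomputable section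

/-- `l` is a tour on the finite set `A`: a cyclic ordering of `A`, visiting each element
exactly once. -/
def IsTour {V : Type*} [DecidableEq V] (A : Finset V) (l : List V) : Prop :=
  l.Nodup ∧ l.toFinset = A

/-- The `k`-hop cost of a tour given as a cyclic list `v_1, …, v_n`:
`∑_{Δ=1}^{k} ∑_{i=1}^{n} c(v_i, v_{i+Δ})`, indices mod `n`. -/
def cycHopCost {V : Type*} (c : V → V → ℝ) (k : ℕ) (l : List V) : ℝ :=
  ∑ Δ ∈ Finset.Icc 1 k, (List.zipWith c l (l.rotate Δ)).sum

section Helpers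

variable {V : Type*}

lemma zipSum_nonneg (c : V → V → ℝ) (h : ∀ x y, 0 ≤ c x y) :
    ∀ (l l' : List V), 0 ≤ (List.zipWith c l l').sum
  | [], _ => by simp
  | _ :: _, [] => by simp
  | x :: l, y :: l' => by
      simp only [List.zipWith_cons_cons, List.sum_cons]
      exact add_nonneg (h x y) (zipSum_nonneg c h l l')

lemma zipSum_le (f g : V → V → ℝ) (h : ∀ x y, f x y ≤ g x y) :
    ∀ (l l' : List V), (List.zipWith f l l').sum ≤ (List.zipWith g l l').sum
  | [], _ => by simp
  | _ :: _, [] => by simp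
  | x :: l, y :: l' => by
      simp only [List.zipWith_cons_cons, List.sum_cons]
      exact add_le_add (h x y) (zipSum_le f g h l l')

lemma zipSum_scale (c : V → V → ℝ) (a : ℝ) :
    ∀ (l l' : List V),
      (List.zipWith (fun x y => c x y * a) l l').sum = (List.zipWith c l l').sum * a
  | [], _ => by simp
  | _ :: _, [] => by simp
  | x :: l, y :: l' => by
      simp only [List.zipWith_cons_cons, List.sum_cons, zipSum_scale c a l l']
      ring

lemma zipSum_add_one (f : V → V → ℝ) :
    ∀ (l l' : List V), l.length = l'.length →
      (List.zipWith (fun x y => f x y + 1) l l').sum = (List.zipWith f l l').sum + l.length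
  | [], [], _ => by simp
  | [], _ :: _, h => by simp at h
  | _ :: _, [], h => by simp at h
  | x :: l, y :: l', h => by
      simp only [List.zipWith_cons_cons, List.sum_cons, List.length_cons]
      rw [zipSum_add_one f l l' (by simpa using h)]
      push_cast
      ring

/-- Sum of costs of consecutive pairs along a path. -/
def pathSum (c : V → V → ℝ) : List V → ℝ
  | [] => 0
  | [_] => 0
  | x :: y :: t => c x y + pathSum c (y :: t)

lemma pathSum_nonneg (c : V → V → ℝ) (h : ∀ x y, 0 ≤ c x y) :
    ∀ l : List V, 0 ≤ pathSum c l
  | [] => le_refl 0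
  | [_] => le_refl 0
  | x :: y :: t => add_nonneg (h x y) (pathSum_nonneg c h (y :: t))

lemma pathSum_append (c : V → V → ℝ) (h0 : ∀ x y, 0 ≤ c x y) :
    ∀ (p q : List V), pathSum c p + pathSum c q ≤ pathSum c (p ++ q)
  | [], q => by simp [pathSum]
  | [x], q => by
      cases q with
      | nil => simp [pathSum]
      | cons y q' =>
          have h1 : pathSum c ([x] ++ y :: q') = c x y + pathSum c (y :: q') := rfl
          have h2 : pathSum c [x] = 0 := rfl
          rw [h1, h2]
          linarith [h0 x y]
  | x :: z :: t, q => by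
      have ih := pathSum_append c h0 (z :: t) q
      have h1 : pathSum c ((x :: z :: t) ++ q) = c x z + pathSum c ((z :: t) ++ q) := rfl
      have h2 : pathSum c (x :: z :: t) = c x z + pathSum c (z :: t) := rfl
      rw [h1, h2]
      linarith

lemma pathSum_head_le (c : V → V → ℝ) (h0 : ∀ x y, 0 ≤ c x y) (hrefl : ∀ v, c v v = 0)
    (htri : ∀ x y z, c x z ≤ c x y + c y z) :
    ∀ (l : List V) (a b : V), b ∈ a :: l → c a b ≤ pathSum c (a :: l)
  | [], a, b, hb => by
      simp only [List.mem_singleton] at hb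
      subst hb
      simp [pathSum, hrefl]
  | z :: t, a, b, hb => by
      have h1 : pathSum c (a :: z :: t) = c a z + pathSum c (z :: t) := rfl
      rw [h1]
      rcases List.mem_cons.mp hb with hba | hb'
      · have hps := pathSum_nonneg c h0 (z :: t)
        rw [hba, hrefl]
        linarith [h0 a z]
      · have ih := pathSum_head_le c h0 hrefl htri t z b hb'
        have h2 := htri a z b
        linarith

lemma zip_cycle_eq (c : V → V → ℝ) :
    ∀ (s : List V) (x w : V),
      (List.zipWith c (x :: s) (s ++ [w])).sum = pathSum c (x :: s ++ [w])
  | [], x, w => by simp [pathSum]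
  | y :: t, x, w => by
      have ih := zip_cycle_eq c t y w
      have h1 : pathSum c (x :: (y :: t) ++ [w]) = c x y + pathSum c ((y :: t) ++ [w]) := rfl
      simp only [List.cons_append, List.zipWith_cons_cons, List.sum_cons]
      simp only [List.cons_append] at h1 ih
      rw [h1, ih]

lemma cyc_le (c : V → V → ℝ) (h0 : ∀ x y, 0 ≤ c x y) (hrefl : ∀ v, c v v = 0)
    (htri : ∀ x y z, c x z ≤ c x y + c y z) (l : List V) (a b : V)
    (ha : a ∈ l) (hb : b ∈ l) : c a b ≤ (List.zipWith c l (l.rotate 1)).sum := by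
  cases l with
  | nil => exact absurd ha List.not_mem_nil
  | cons x s =>
      have hrot : (x :: s).rotate 1 = s ++ [x] := by
        rw [List.rotate_cons_succ, List.rotate_zero]
      rw [hrot, zip_cycle_eq c s x x]
      obtain ⟨p, q, hpq⟩ := List.append_of_mem ha
      have htot : pathSum c (x :: s ++ [x]) = pathSum c (p ++ (a :: (q ++ [x]))) := by
        rw [hpq]; simp [List.append_assoc]
      rw [htot]
      have hsplit := pathSum_append c h0 p (a :: (q ++ [x]))
      rw [hpq] at hb
      rcases List.mem_append.mp hb with hbp | hbq
      · -- b occurs before a in the list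
        cases p with
        | nil => exact absurd hbp List.not_mem_nil
        | cons hd p' =>
            have hx : hd = x := by
              have h2 := hpq
              simp only [List.cons_append, List.cons.injEq] at h2
              exact h2.1.symm
            subst hx
            have hxb : c hd b ≤ pathSum c (hd :: p') :=
              pathSum_head_le c h0 hrefl htri p' hd b hbp
            have hax : c a hd ≤ pathSum c (a :: (q ++ [hd])) :=
              pathSum_head_le c h0 hrefl htri (q ++ [hd]) a hd (by simp)
            have htr := htri a hd b
            linarith
      · -- b occurs at or after a
        have hab : c a b ≤ pathSum c (a :: (q ++ [x])) := by
          apply pathSum_head_le c h0 hrefl htri (q ++ [x]) a b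
          rcases List.mem_cons.mp hbq with rfl | hbq'
          · exact List.mem_cons_self
          · exact List.mem_cons_of_mem _ (List.mem_append_left _ hbq')
        have hp := pathSum_nonneg c h0 p
        linarith

end Helpers

/-- given a metric cost `c` with maximum value `D > 0` and `1 ≤ k ≤ n − 1`,
setting `K := D/(2n³)`, there is a nonnegative-integer-valued metric `ĉ` bounded by `2n³`
such that every tour `T` satisfies `ĉ^{(k)}(T) ≤ c^{(k)}(T)/K ≤ 2·ĉ^{(k)}(T)` and
`ĉ^{(k)}(T) ≥ n²`. -/
theorem statement16 {V : Type*} [Fintype V] [DecidableEq V]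
    (c : V → V → ℝ) (k : ℕ) (D : ℝ)
    (hc0 : ∀ x y, 0 ≤ c x y)
    (hcrefl : ∀ v, c v v = 0)
    (htri : ∀ x y z, c x z ≤ c x y + c y z)
    (hDub : ∀ x y, c x y ≤ D) (hDatt : ∃ x y, c x y = D) (hD : 0 < D)
    (hk1 : 1 ≤ k) (hkn : k ≤ Fintype.card V - 1) :
    ∃ chat : V → V → ℕ,
      (∀ v, chat v v = 0) ∧
      (∀ x y z, chat x z ≤ chat x y + chat y z) ∧
      (∀ x y, chat x y ≤ 2 * Fintype.card V ^ 3) ∧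
      ∀ T : List V, IsTour Finset.univ T →
        cycHopCost (fun x y => (chat x y : ℝ)) k T ≤
            cycHopCost c k T / (D / (2 * (Fintype.card V : ℝ) ^ 3)) ∧
        cycHopCost c k T / (D / (2 * (Fintype.card V : ℝ) ^ 3)) ≤
            2 * cycHopCost (fun x y => (chat x y : ℝ)) k T ∧
        (Fintype.card V : ℝ) ^ 2 ≤ cycHopCost (fun x y => (chat x y : ℝ)) k T := by
  classical
  set n := Fintype.card V with hn
  have hn2 : 2 ≤ n := by omega
  have hN0 : (0:ℝ) < (n:ℝ) := by
    have : 0 < n := by omega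
    exact_mod_cast this
  have hN2 : (2:ℝ) ≤ (n:ℝ) := by exact_mod_cast hn2
  have hDne : D ≠ 0 := ne_of_gt hD
  have hNne : ((n:ℝ)) ≠ 0 := ne_of_gt hN0
  set a : ℝ := (n:ℝ)^3 / D with ha'
  have ha0 : 0 < a := by rw [ha']; positivity
  have hDa : D * a = (n:ℝ)^3 := by rw [ha']; field_simp
  set ch : V → V → ℕ := fun x y => ⌈c x y * a⌉₊ with hch
  refine ⟨ch, ?_, ?_, ?_, ?_⟩
  · intro v
    simp [hch, hcrefl v]
  · intro x y z
    simp only [hch]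
    calc ⌈c x z * a⌉₊ ≤ ⌈(c x y + c y z) * a⌉₊ :=
          Nat.ceil_le_ceil (mul_le_mul_of_nonneg_right (htri x y z) ha0.le)
      _ = ⌈c x y * a + c y z * a⌉₊ := by rw [add_mul]
      _ ≤ ⌈c x y * a⌉₊ + ⌈c y z * a⌉₊ := Nat.ceil_add_le _ _
  · intro x y
    simp only [hch]
    have h1 : c x y * a ≤ ((n^3 : ℕ) : ℝ) := by
      have h2 : c x y * a ≤ D * a := mul_le_mul_of_nonneg_right (hDub x y) ha0.le
      push_cast
      linarith
    calc ⌈c x y * a⌉₊ ≤ ⌈((n^3:ℕ):ℝ)⌉₊ := Nat.ceil_le_ceil h1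
      _ = n^3 := Nat.ceil_natCast _
      _ ≤ 2 * n^3 := by omega
  · intro T hT
    obtain ⟨hnd, htf⟩ := hT
    have hlen : T.length = n := by
      have h := List.toFinset_card_of_nodup hnd
      rw [htf, Finset.card_univ] at h
      exact h.symm
    set S := cycHopCost c k T with hS
    have hnonnegD : ∀ Δ ∈ Finset.Icc 1 k, 0 ≤ (List.zipWith c T (T.rotate Δ)).sum :=
      fun Δ _ => zipSum_nonneg c hc0 _ _
    have hSD : D ≤ S := by
      obtain ⟨x, y, hxy⟩ := hDatt
      have hx : x ∈ T := by rw [← List.mem_toFinset, htf]; exact Finset.mem_univ x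
      have hy : y ∈ T := by rw [← List.mem_toFinset, htf]; exact Finset.mem_univ y
      have h1 : D ≤ (List.zipWith c T (T.rotate 1)).sum := by
        rw [← hxy]
        exact cyc_le c hc0 hcrefl htri T x y hx hy
      have h2 : (List.zipWith c T (T.rotate 1)).sum ≤ S :=
        Finset.single_le_sum hnonnegD (Finset.mem_Icc.mpr ⟨le_refl 1, hk1⟩)
      linarith
    have hscale : cycHopCost (fun x y => c x y * a) k T = S * a := by
      rw [hS]
      unfold cycHopCost
      rw [Finset.sum_mul]
      exact Finset.sum_congr rfl fun Δ _ => zipSum_scale c a T _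
    have hlow : S * a ≤ cycHopCost (fun x y => ((ch x y : ℕ):ℝ)) k T := by
      rw [← hscale]
      unfold cycHopCost
      apply Finset.sum_le_sum
      intro Δ _
      apply zipSum_le
      intro x y
      simp only [hch]
      exact Nat.le_ceil _
    have hup : cycHopCost (fun x y => ((ch x y : ℕ):ℝ)) k T ≤ S * a + k * n := by
      have hD1 : ∀ Δ ∈ Finset.Icc 1 k,
          (List.zipWith (fun x y => ((ch x y : ℕ):ℝ)) T (T.rotate Δ)).sum ≤
            (List.zipWith (fun x y => c x y * a + 1) T (T.rotate Δ)).sum := by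
        intro Δ _
        apply zipSum_le
        intro x y
        simp only [hch]
        exact (Nat.ceil_lt_add_one (mul_nonneg (hc0 x y) ha0.le)).le
      have hD2 : ∀ Δ ∈ Finset.Icc 1 k,
          (List.zipWith (fun x y => c x y * a + 1) T (T.rotate Δ)).sum =
            (List.zipWith (fun x y => c x y * a) T (T.rotate Δ)).sum + T.length :=
        fun Δ _ => zipSum_add_one _ T _ (T.length_rotate Δ).symm
      calc cycHopCost (fun x y => ((ch x y : ℕ):ℝ)) k T
          ≤ ∑ Δ ∈ Finset.Icc 1 k, (List.zipWith (fun x y => c x y * a + 1) T (T.rotate Δ)).sum :=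
            Finset.sum_le_sum hD1
        _ = ∑ Δ ∈ Finset.Icc 1 k,
              ((List.zipWith (fun x y => c x y * a) T (T.rotate Δ)).sum + T.length) :=
            Finset.sum_congr rfl hD2
        _ = cycHopCost (fun x y => c x y * a) k T + k * n := by
            rw [Finset.sum_add_distrib, Finset.sum_const, Nat.card_Icc, hlen]
            unfold cycHopCost
            simp only [nsmul_eq_mul]
            push_cast
            ring
        _ = S * a + k * n := by rw [hscale]
    have hdiv : S / (D / (2 * (n:ℝ)^3)) = 2 * (S * a) := by
      rw [ha']
      field_simp
    have hSa : (n:ℝ)^3 ≤ S * a := by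
      have h3 : D * a ≤ S * a := mul_le_mul_of_nonneg_right hSD ha0.le
      linarith
    have hkN : (k:ℝ) * n ≤ (n:ℝ)^3 := by
      have hk : (k:ℝ) ≤ (n:ℝ) := by
        have hkn' : k ≤ n := by omega
        exact_mod_cast hkn'
      have h1 : (k:ℝ) * n ≤ (n:ℝ) * n := mul_le_mul_of_nonneg_right hk hN0.le
      have h2 : (n:ℝ) * n ≤ (n:ℝ)^3 := by nlinarith
      linarith
    refine ⟨?_, ?_, ?_⟩
    · rw [hdiv]
      linarith
    · rw [hdiv]
      linarith
    · nlinarith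

end
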